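/- Let R be a finite, reduced, crystallographic root system spanning a finite-dimensional real inner product space V, with base S and positive roots R⁺, and let S_P ⊆ S with R_P⁺ the set of positive roots that are nonnegative integer combinations of elements of S_P. Fix β ∈ S∖S_P and an integer j with 1 ≤ j ≤ n_β − 1. Then for every function k : S∖S_P → ℤ with k(β) = −j, one has ∏_{α ∈ R⁺∖R_P⁺} ( ht(α^∨) + Σ_{γ ∈ S∖S_P} k(γ) · c_γ(α^∨) ) = 0. -/

import Mathlib

open scoped RealInnerProductSpace

/-- A finite, reduced, crystallographic root system `R` spanning a
finite-dimensional real inner product space `V`, together with a base `S`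
(the simple roots), the corresponding set `Rpos` of positive roots,
the integer coefficients `coeff α γ` of a root `α` in the base `S`,
the integer coefficients `ccoeff α γ` of the coroot `α^∨ = (2/(α,α))•α` of a
positive root in the simple coroots, and the integer Cartan pairings
`cartan α β = ⟨α, β^∨⟩ = 2(α,β)/(β,β)`. -/
structure RootSystemWithBase (V : Type*) [NormedAddCommGroup V]
    [InnerProductSpace ℝ V] [FiniteDimensional ℝ V] where
  R : Finset V
  S : Finset V
  Rpos : Finset V
  coeff : V → V → ℤ
  ccoeff : V → V → ℤ
  cartan : V → V → ℤ
  root_ne_zero : ∀ α ∈ R, α ≠ (0 : V)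
  span_top : Submodule.span ℝ (R : Set V) = ⊤
  neg_mem : ∀ α ∈ R, -α ∈ R
  reduced : ∀ α ∈ R, ∀ c : ℝ, c • α ∈ (R : Set V) → c = 1 ∨ c = -1
  cartan_eq : ∀ α ∈ R, ∀ β ∈ R, (cartan α β : ℝ) = 2 * ⟪α, β⟫ / ⟪β, β⟫
  reflect_mem : ∀ α ∈ R, ∀ β ∈ R, β - cartan β α • α ∈ R
  S_subset : ∀ γ ∈ S, γ ∈ Rpos
  Rpos_subset : ∀ α ∈ Rpos, α ∈ R
  S_indep : LinearIndependent ℝ (Subtype.val : {x // x ∈ S} → V)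
  root_eq_sum : ∀ α ∈ R, α = ∑ γ ∈ S, coeff α γ • γ
  mem_Rpos_iff : ∀ α ∈ R, (α ∈ Rpos ↔ ∀ γ ∈ S, 0 ≤ coeff α γ)
  pos_or_neg : ∀ α ∈ R, α ∈ Rpos ∨ -α ∈ Rpos
  coroot_eq_sum : ∀ α ∈ Rpos,
    (2 / ⟪α, α⟫) • α = ∑ γ ∈ S, ccoeff α γ • ((2 / ⟪γ, γ⟫) • γ)
  ccoeff_nonneg : ∀ α ∈ Rpos, ∀ γ ∈ S, 0 ≤ ccoeff α γ

namespace RootSystemWithBase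

variable {V : Type*} [NormedAddCommGroup V] [InnerProductSpace ℝ V]
  [FiniteDimensional ℝ V] (D : RootSystemWithBase V)

/-- The coroot `α^∨ = 2α/(α,α)` of a root `α`. -/
noncomputable def coroot (_D : RootSystemWithBase V) (α : V) : V := (2 / ⟪α, α⟫) • α

/-- The height of the coroot of a positive root: the sum of its coefficients
in the basis of simple coroots. -/
def ht (α : V) : ℤ := ∑ γ ∈ D.S, D.ccoeff α γ

open Classical in
/-- `R_P⁺`: the positive roots that are nonnegative integer combinations of
the elements of `SP`. -/
noncomputable def RP (SP : Finset V) : Finset V :=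
  D.Rpos.filter fun α => ∃ c : V → ℤ, (∀ γ, 0 ≤ c γ) ∧ α = ∑ γ ∈ SP, c γ • γ

/-- `n_β := 2 - ⟨Σ_{α ∈ R_P⁺} α, β^∨⟩`. -/
noncomputable def n (SP : Finset V) (β : V) : ℤ := 2 - ∑ α ∈ D.RP SP, D.cartan α β

/-- The reflection `s_α` in a root `α`, as a map `V → V`. -/
noncomputable def refl (_D : RootSystemWithBase V) (α : V) (x : V) : V := x - (2 * ⟪x, α⟫ / ⟪α, α⟫) • α

/-- `w : V → V` can be written as a composition of `t` simple reflections. -/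
noncomputable def IsWord (w : V → V) (t : ℕ) : Prop :=
  ∃ b : Fin t → V, (∀ i, b i ∈ D.S) ∧
    w = (List.ofFn fun i => D.refl (b i)).foldr (· ∘ ·) id

/-- Membership in the Weyl group `W` (as a group of maps `V → V`): `w` is a
composition of simple reflections. -/
noncomputable def MemW (w : V → V) : Prop := ∃ t, D.IsWord w t

/-- The length of an element of the Weyl group: the smallest number of simple
reflections needed to express it. -/
noncomputable def len (w : V → V) : ℕ := sInf {t | D.IsWord w t}

/-- The inversion set `I(w) = {α ∈ R⁺ : w(α) ∈ -R⁺}`. -/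
def inversions (w : V → V) : Set V := {α | α ∈ D.Rpos ∧ -(w α) ∈ D.Rpos}

/-- `W^j = {w ∈ W : I(w) ⊆ R⁺ ∖ R_j}`, the minimal length representatives of
`W/W_j`, where `R_j` is the set of roots lying in the span of `S ∖ {β}`. -/
noncomputable def Wj (β : V) : Set (V → V) :=
  {w | D.MemW w ∧
    ∀ α ∈ D.inversions w, α ∉ Submodule.span ℝ ((D.S : Set V) \ {β})}

end RootSystemWithBase


noncomputable def pair {V : Type*} [NormedAddCommGroup V] [InnerProductSpace ℝ V]
    (x y : V) : ℝ := 2 * ⟪x, y⟫ / ⟪y, y⟫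

section basic
variable {V : Type*} [NormedAddCommGroup V] [InnerProductSpace ℝ V]

lemma inner_self_pos' {y : V} (hy : y ≠ 0) : (0:ℝ) < ⟪y, y⟫ :=
  lt_of_le_of_ne real_inner_self_nonneg (Ne.symm (inner_self_ne_zero.2 hy))

lemma pair_eq_inner_smul (x y : V) : pair x y = ⟪x, (2 / ⟪y, y⟫) • y⟫ := by
  rw [real_inner_smul_right]; unfold pair; ring

lemma pair_add (x x' y : V) : pair (x + x') y = pair x y + pair x' y := by
  unfold pair; rw [inner_add_left]; ring

lemma pair_sub (x x' y : V) : pair (x - x') y = pair x y - pair x' y := by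
  unfold pair; rw [inner_sub_left]; ring

lemma pair_smul (c : ℝ) (x y : V) : pair (c • x) y = c * pair x y := by
  unfold pair; rw [real_inner_smul_left]; ring

lemma pair_sum {ι : Type*} (s : Finset ι) (f : ι → V) (y : V) :
    pair (∑ i ∈ s, f i) y = ∑ i ∈ s, pair (f i) y := by
  unfold pair; rw [sum_inner, Finset.mul_sum, Finset.sum_div]

/-- reflection in `y` -/
noncomputable def srefl (y x : V) : V := x - pair x y • y

lemma srefl_inner (y x z : V) : ⟪srefl y x, z⟫ = ⟪x, z⟫ - pair x y * ⟪y, z⟫ := by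
  unfold srefl; rw [inner_sub_left, real_inner_smul_left]

lemma pair_self (y : V) (hy : y ≠ 0) : pair y y = 2 := by
  unfold pair; field_simp [inner_self_ne_zero.2 hy]

lemma srefl_neg_self (y : V) (hy : y ≠ 0) : srefl y y = -y := by
  unfold srefl; rw [pair_self y hy, two_smul]; abel

lemma inner_srefl_srefl (y x z : V) (hy : y ≠ 0) :
    ⟪srefl y x, srefl y z⟫ = ⟪x, z⟫ := by
  have h : ⟪y, y⟫ ≠ (0:ℝ) := inner_self_ne_zero.2 hy
  unfold srefl pair
  simp only [inner_sub_left, inner_sub_right, real_inner_smul_left,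
    real_inner_smul_right, real_inner_comm y x, real_inner_comm z y]
  field_simp
  ring

lemma srefl_involutive (y x : V) (hy : y ≠ 0) : srefl y (srefl y x) = x := by
  unfold srefl
  rw [pair_sub, pair_smul, pair_self y hy]
  module

lemma pair_srefl_srefl (y x z : V) (hy : y ≠ 0) :
    pair (srefl y x) (srefl y z) = pair x z := by
  unfold pair
  rw [inner_srefl_srefl y x z hy, inner_srefl_srefl y z z hy]

lemma srefl_linear_smul (y : V) (c : ℝ) (x : V) : srefl y (c • x) = c • srefl y x := by
  unfold srefl; rw [pair_smul, smul_sub, smul_smul]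

end basic
section basic2
variable {V : Type*} [NormedAddCommGroup V] [InnerProductSpace ℝ V]

lemma pair_neg_right (x y : V) : pair x (-y) = -pair x y := by
  unfold pair
  rw [inner_neg_right, inner_neg_neg]
  ring

lemma inner_srefl_comm (y x z : V) : ⟪srefl y x, z⟫ = ⟪x, srefl y z⟫ := by
  unfold srefl pair
  rw [inner_sub_left, inner_sub_right, real_inner_smul_left, real_inner_smul_right,
    real_inner_comm z y]
  ring

lemma pair_srefl_right (y x z : V) (hy : y ≠ 0) :
    pair (srefl y x) z = pair x (srefl y z) := by
  have h1 : ⟪srefl y z, srefl y z⟫ = ⟪z, z⟫ := inner_srefl_srefl y z z hy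
  unfold pair
  rw [inner_srefl_comm, h1]

lemma inner_eq_pair (x α : V) (hα : α ≠ 0) :
    ⟪x, α⟫ = pair x α * ⟪α, α⟫ / 2 := by
  have h : ⟪α, α⟫ ≠ (0:ℝ) := inner_self_ne_zero.2 hα
  unfold pair
  field_simp

end basic2
section basic3
variable {V : Type*} [NormedAddCommGroup V] [InnerProductSpace ℝ V]
lemma pair_srefl (y x z : V) :
    pair (srefl y x) z = pair x z - pair x y * pair y z := by
  unfold srefl
  rw [pair_sub, pair_smul]
end basic3
namespace RootSystemWithBase
variable {V : Type*} [NormedAddCommGroup V] [InnerProductSpace ℝ V]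
  [FiniteDimensional ℝ V] (D : RootSystemWithBase V)

lemma simple_ne_zero {γ : V} (hγ : γ ∈ D.S) : γ ≠ 0 :=
  D.root_ne_zero γ (D.Rpos_subset γ (D.S_subset γ hγ))

/-- uniqueness of coefficients in the simple-root expansion -/
lemma coeff_zero_of_sum_zero (d : V → ℝ) (h : ∑ γ ∈ D.S, d γ • γ = 0) :
    ∀ γ ∈ D.S, d γ = 0 := by
  intro γ hγ
  have h2 : ∑ i ∈ Finset.univ, (fun i : {x // x ∈ D.S} => d i.val) i • i.val = 0 := by
    rw [Finset.sum_coe_sort D.S (fun x => d x • x)] at *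
    exact h
  have := linearIndependent_iff'.1 D.S_indep Finset.univ
    (fun i : {x // x ∈ D.S} => d i.val) h2 ⟨γ, hγ⟩ (Finset.mem_univ _)
  exact this

lemma coeff_unique {α : V} (hα : α ∈ D.R) (d : V → ℝ)
    (h : α = ∑ γ ∈ D.S, d γ • γ) : ∀ γ ∈ D.S, d γ = (D.coeff α γ : ℝ) := by
  intro γ hγ
  have h0 : ∑ γ ∈ D.S, (d γ - (D.coeff α γ : ℝ)) • γ = 0 := by
    have := D.root_eq_sum α hα
    simp only [sub_smul, Finset.sum_sub_distrib]
    rw [← h]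
    have : ∑ γ ∈ D.S, (D.coeff α γ : ℝ) • γ = ∑ γ ∈ D.S, D.coeff α γ • γ := by
      refine Finset.sum_congr rfl (fun γ _ => ?_)
      rw [Int.cast_smul_eq_zsmul]
    rw [this, ← D.root_eq_sum α hα]
    abel
  have := D.coeff_zero_of_sum_zero _ h0 γ hγ
  linarith

lemma ccoeff_unique {α : V} (hα : α ∈ D.Rpos) (d : V → ℝ)
    (h : (2 / ⟪α, α⟫) • α = ∑ γ ∈ D.S, d γ • ((2 / ⟪γ, γ⟫) • γ)) :
    ∀ γ ∈ D.S, d γ = (D.ccoeff α γ : ℝ) := by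
  intro γ hγ
  have h0 : ∑ γ ∈ D.S, ((d γ - (D.ccoeff α γ : ℝ)) * (2 / ⟪γ, γ⟫)) • γ = 0 := by
    have hc := D.coroot_eq_sum α hα
    have hc' : ∑ γ ∈ D.S, (D.ccoeff α γ : ℝ) • ((2 / ⟪γ, γ⟫) • γ)
        = ∑ γ ∈ D.S, D.ccoeff α γ • ((2 / ⟪γ, γ⟫) • γ) := by
      refine Finset.sum_congr rfl (fun γ _ => ?_)
      rw [Int.cast_smul_eq_zsmul]
    calc ∑ γ ∈ D.S, ((d γ - (D.ccoeff α γ : ℝ)) * (2 / ⟪γ, γ⟫)) • γ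
        = ∑ γ ∈ D.S, (d γ • ((2 / ⟪γ, γ⟫) • γ) - (D.ccoeff α γ : ℝ) • ((2 / ⟪γ, γ⟫) • γ)) := by
          refine Finset.sum_congr rfl (fun γ _ => ?_)
          rw [smul_smul, smul_smul, ← sub_smul, sub_mul]
      _ = ∑ γ ∈ D.S, d γ • ((2 / ⟪γ, γ⟫) • γ) - ∑ γ ∈ D.S, (D.ccoeff α γ : ℝ) • ((2 / ⟪γ, γ⟫) • γ) := by
          rw [Finset.sum_sub_distrib]
      _ = (2 / ⟪α, α⟫) • α - (2 / ⟪α, α⟫) • α := by rw [← h, hc', ← hc]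
      _ = 0 := sub_self _
  have hz := D.coeff_zero_of_sum_zero _ h0 γ hγ
  have hγ0 : γ ≠ 0 := D.simple_ne_zero hγ
  have h2 : (2 / ⟪γ, γ⟫ : ℝ) ≠ 0 := by
    have h3 : ⟪γ, γ⟫ ≠ (0:ℝ) := inner_self_ne_zero.2 hγ0
    positivity
  have := mul_eq_zero.1 hz
  rcases this with h' | h'
  · linarith
  · exact absurd h' h2
end RootSystemWithBase
namespace RootSystemWithBase
variable {V : Type*} [NormedAddCommGroup V] [InnerProductSpace ℝ V]
  [FiniteDimensional ℝ V] (D : RootSystemWithBase V)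

lemma root_inner_ne {α : V} (hα : α ∈ D.R) : ⟪α, α⟫ ≠ (0:ℝ) :=
  inner_self_ne_zero.2 (D.root_ne_zero α hα)

lemma pair_cartan {α γ : V} (hα : α ∈ D.R) (hγ : γ ∈ D.R) :
    pair α γ = (D.cartan α γ : ℝ) := (D.cartan_eq α hα γ hγ).symm

lemma srefl_root_mem {γ α : V} (hγ : γ ∈ D.R) (hα : α ∈ D.R) :
    srefl γ α ∈ D.R := by
  have h := D.reflect_mem γ hγ α hα
  have : srefl γ α = α - D.cartan α γ • γ := by
    unfold srefl
    rw [D.pair_cartan hα hγ, Int.cast_smul_eq_zsmul]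
  rw [this]; exact h

lemma pair_expand {α : V} (hα : α ∈ D.Rpos) (x : V) :
    pair x α = ∑ γ ∈ D.S, (D.ccoeff α γ : ℝ) * pair x γ := by
  rw [pair_eq_inner_smul, D.coroot_eq_sum α hα, inner_sum]
  refine Finset.sum_congr rfl (fun γ _ => ?_)
  rw [← Int.cast_smul_eq_zsmul ℝ, real_inner_smul_right, pair_eq_inner_smul]

lemma coeff_neg {α : V} (hα : α ∈ D.R) {γ : V} (hγ : γ ∈ D.S) :
    (D.coeff (-α) γ : ℝ) = -(D.coeff α γ : ℝ) := by
  have hneg : -α ∈ D.R := D.neg_mem α hα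
  have h : -α = ∑ γ ∈ D.S, (-(D.coeff α γ : ℝ)) • γ := by
    conv_lhs => rw [D.root_eq_sum α hα]
    rw [← Finset.sum_neg_distrib]
    refine Finset.sum_congr rfl fun γ _ => ?_
    rw [← Int.cast_smul_eq_zsmul ℝ, neg_smul]
  exact (D.coeff_unique hneg _ h γ hγ).symm

lemma mem_Rpos_of_coeff_pos {α : V} (hα : α ∈ D.R) {δ : V} (hδ : δ ∈ D.S)
    (h : 0 < D.coeff α δ) : α ∈ D.Rpos := by
  rcases D.pos_or_neg α hα with h' | h'
  · exact h'
  · exfalso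
    have h2 := (D.mem_Rpos_iff (-α) (D.neg_mem α hα)).1 h' δ hδ
    have h3 := D.coeff_neg hα hδ
    have : (0:ℝ) ≤ (D.coeff (-α) δ : ℝ) := by exact_mod_cast h2
    rw [h3] at this
    have : (0:ℝ) < (D.coeff α δ : ℝ) := by exact_mod_cast h
    linarith

end RootSystemWithBase
namespace RootSystemWithBase
variable {V : Type*} [NormedAddCommGroup V] [InnerProductSpace ℝ V]
  [FiniteDimensional ℝ V] [DecidableEq V] (D : RootSystemWithBase V)

lemma coeff_simple {γ : V} (hγ : γ ∈ D.S) {δ : V} (hδ : δ ∈ D.S) :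
    (D.coeff γ δ : ℝ) = if δ = γ then 1 else 0 := by
  have h : ∑ δ ∈ D.S, (if δ = γ then (1:ℝ) else 0) • δ = γ := by
    rw [Finset.sum_eq_single_of_mem γ hγ]
    · simp
    · intro b _ hb; simp [hb]
  exact (D.coeff_unique (D.Rpos_subset γ (D.S_subset γ hγ)) _ h.symm δ hδ).symm

lemma ccoeff_simple {γ : V} (hγ : γ ∈ D.S) {δ : V} (hδ : δ ∈ D.S) :
    (D.ccoeff γ δ : ℝ) = if δ = γ then 1 else 0 := by
  have h : (2 / ⟪γ, γ⟫) • γ = ∑ δ ∈ D.S, (if δ = γ then (1:ℝ) else 0) • ((2 / ⟪δ, δ⟫) • δ) := by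
    rw [Finset.sum_eq_single_of_mem γ hγ]
    · simp
    · intro b _ hb; simp [hb]
  exact (D.ccoeff_unique (D.S_subset γ hγ) _ h δ hδ).symm

lemma coeff_eq_ccoeff_mul {α : V} (hα : α ∈ D.Rpos) {δ : V} (hδ : δ ∈ D.S) :
    (D.coeff α δ : ℝ) = (D.ccoeff α δ : ℝ) * (⟪α, α⟫ / ⟪δ, δ⟫) := by
  have hαR : α ∈ D.R := D.Rpos_subset α hα
  have hαne : ⟪α, α⟫ ≠ (0:ℝ) := D.root_inner_ne hαR
  have h : α = ∑ δ ∈ D.S, ((D.ccoeff α δ : ℝ) * (⟪α, α⟫ / ⟪δ, δ⟫)) • δ := by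
    have h1 : α = (⟪α, α⟫ / 2) • ((2 / ⟪α, α⟫) • α) := by
      rw [smul_smul]; field_simp; rw [one_smul]
    conv_lhs => rw [h1, D.coroot_eq_sum α hα, Finset.smul_sum]
    refine Finset.sum_congr rfl fun δ' hδ' => ?_
    rw [← Int.cast_smul_eq_zsmul ℝ, smul_smul, smul_smul]
    congr 1
    have : ⟪δ', δ'⟫ ≠ (0:ℝ) := D.root_inner_ne (D.Rpos_subset δ' (D.S_subset δ' hδ'))
    field_simp
  exact (D.coeff_unique hαR _ h δ hδ).symm

lemma ccoeff_eq_zero_iff {α : V} (hα : α ∈ D.Rpos) {δ : V} (hδ : δ ∈ D.S) :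
    D.ccoeff α δ = 0 ↔ D.coeff α δ = 0 := by
  have h := D.coeff_eq_ccoeff_mul hα hδ
  have hq : (⟪α, α⟫ / ⟪δ, δ⟫ : ℝ) ≠ 0 := by
    have h1 := D.root_inner_ne (D.Rpos_subset α hα)
    have h2 := D.root_inner_ne (D.Rpos_subset δ (D.S_subset δ hδ))
    exact div_ne_zero h1 h2
  constructor
  · intro h0
    have : (D.coeff α δ : ℝ) = 0 := by rw [h, h0]; simp
    exact_mod_cast this
  · intro h0
    have : (D.ccoeff α δ : ℝ) * (⟪α, α⟫ / ⟪δ, δ⟫) = 0 := by rw [← h, h0]; simp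
    rcases mul_eq_zero.1 this with h' | h'
    · exact_mod_cast h'
    · exact absurd h' hq
end RootSystemWithBase
set_option linter.unusedSectionVars false
namespace RootSystemWithBase
variable {V : Type*} [NormedAddCommGroup V] [InnerProductSpace ℝ V]
  [FiniteDimensional ℝ V] [DecidableEq V] (D : RootSystemWithBase V)

lemma coeff_srefl {γ : V} (hγ : γ ∈ D.S) {α : V} (hα : α ∈ D.R) {δ : V} (hδ : δ ∈ D.S) :
    (D.coeff (srefl γ α) δ : ℝ)
      = (D.coeff α δ : ℝ) - (D.cartan α γ : ℝ) * (if δ = γ then 1 else 0) := by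
  have hγR : γ ∈ D.R := D.Rpos_subset γ (D.S_subset γ hγ)
  have hsα : srefl γ α ∈ D.R := D.srefl_root_mem hγR hα
  set c : ℝ := (D.cartan α γ : ℝ) with hc
  have h : srefl γ α = ∑ δ ∈ D.S,
      ((D.coeff α δ : ℝ) - c * (if δ = γ then 1 else 0)) • δ := by
    have e1 : α = ∑ δ ∈ D.S, (D.coeff α δ : ℝ) • δ := by
      conv_lhs => rw [D.root_eq_sum α hα]
      exact Finset.sum_congr rfl fun δ _ => (Int.cast_smul_eq_zsmul ℝ _ _).symm
    have e2 : c • γ = ∑ δ ∈ D.S, (c * (if δ = γ then (1:ℝ) else 0)) • δ := by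
      rw [Finset.sum_eq_single_of_mem γ hγ]
      · simp
      · intro b _ hb; simp [hb]
    have e0 : srefl γ α = α - c • γ := by
      unfold srefl; rw [hc, D.pair_cartan hα hγR]
    rw [e0]
    conv_lhs => rw [e1, e2]
    rw [← Finset.sum_sub_distrib]
    exact Finset.sum_congr rfl fun δ' _ => (sub_smul _ _ _).symm
  exact (D.coeff_unique hsα _ h δ hδ).symm

lemma coroot_srefl {γ : V} (hγ : γ ∈ D.S) {α : V} (hαR : α ∈ D.R) :
    (2 / ⟪srefl γ α, srefl γ α⟫) • (srefl γ α)
      = (2 / ⟪α, α⟫) • α - (D.cartan γ α : ℝ) • ((2 / ⟪γ, γ⟫) • γ) := by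
  have hγR : γ ∈ D.R := D.Rpos_subset γ (D.S_subset γ hγ)
  have hγ0 : γ ≠ 0 := D.simple_ne_zero hγ
  have hαne : ⟪α, α⟫ ≠ (0:ℝ) := D.root_inner_ne hαR
  have hγne : ⟪γ, γ⟫ ≠ (0:ℝ) := D.root_inner_ne hγR
  have hnorm : ⟪srefl γ α, srefl γ α⟫ = ⟪α, α⟫ := inner_srefl_srefl γ α α hγ0
  rw [hnorm]
  have hlin : (2 / ⟪α, α⟫) • (srefl γ α) = srefl γ ((2 / ⟪α, α⟫) • α) :=
    (srefl_linear_smul γ _ _).symm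
  rw [hlin]
  unfold srefl
  congr 1
  rw [smul_smul]
  congr 1
  rw [pair_smul, D.cartan_eq γ hγR α hαR]
  unfold pair
  rw [real_inner_comm γ α]
  field_simp

lemma ccoeff_srefl {γ : V} (hγ : γ ∈ D.S) {α : V} (hα : α ∈ D.Rpos)
    (hsα : srefl γ α ∈ D.Rpos) {δ : V} (hδ : δ ∈ D.S) :
    (D.ccoeff (srefl γ α) δ : ℝ)
      = (D.ccoeff α δ : ℝ) - (D.cartan γ α : ℝ) * (if δ = γ then 1 else 0) := by
  have hαR : α ∈ D.R := D.Rpos_subset α hα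
  have h : (2 / ⟪srefl γ α, srefl γ α⟫) • (srefl γ α) = ∑ δ ∈ D.S,
      ((D.ccoeff α δ : ℝ) - (D.cartan γ α : ℝ) * (if δ = γ then 1 else 0))
        • ((2 / ⟪δ, δ⟫) • δ) := by
    rw [D.coroot_srefl hγ hαR]
    have hgexp : (2 / ⟪γ, γ⟫) • γ
        = ∑ δ ∈ D.S, (if δ = γ then (1:ℝ) else 0) • ((2 / ⟪δ, δ⟫) • δ) := by
      rw [Finset.sum_eq_single_of_mem γ hγ]
      · simp
      · intro b _ hb; simp [hb]
    have e1 : (2 / ⟪α, α⟫) • α = ∑ δ ∈ D.S, (D.ccoeff α δ : ℝ) • ((2 / ⟪δ, δ⟫) • δ) := by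
      rw [D.coroot_eq_sum α hα]
      exact Finset.sum_congr rfl fun δ _ => (Int.cast_smul_eq_zsmul ℝ _ _).symm
    have e2 : (D.cartan γ α : ℝ) • ((2 / ⟪γ, γ⟫) • γ) = ∑ δ ∈ D.S,
        ((D.cartan γ α : ℝ) * (if δ = γ then (1:ℝ) else 0)) • ((2 / ⟪δ, δ⟫) • δ) := by
      rw [Finset.sum_eq_single_of_mem γ hγ]
      · simp
      · intro b _ hb; simp [hb]
    rw [e1, e2, ← Finset.sum_sub_distrib]
    exact Finset.sum_congr rfl fun δ' _ => (sub_smul _ _ _).symm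
  exact (D.ccoeff_unique hsα _ h δ hδ).symm

/-- if all coefficients of a positive root away from `γ` vanish, it equals `γ`. -/
lemma eq_simple_of_support {γ : V} (hγ : γ ∈ D.S) {α : V} (hα : α ∈ D.Rpos)
    (h : ∀ δ ∈ D.S, δ ≠ γ → D.coeff α δ = 0) : α = γ := by
  have hαR : α ∈ D.R := D.Rpos_subset α hα
  have hexp : α = (D.coeff α γ : ℝ) • γ := by
    conv_lhs => rw [D.root_eq_sum α hαR]
    rw [Finset.sum_eq_single_of_mem γ hγ]
    · rw [Int.cast_smul_eq_zsmul]
    · intro b hb hbγ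
      rw [h b hb hbγ, zero_smul]
  have hmem : ((D.coeff α γ : ℝ)) • γ ∈ (D.R : Set V) := by
    rw [← hexp]; exact_mod_cast hαR
  have hred := D.reduced γ (D.Rpos_subset γ (D.S_subset γ hγ)) _ hmem
  have hnn : 0 ≤ D.coeff α γ := (D.mem_Rpos_iff α hαR).1 hα γ hγ
  rcases hred with h1 | h1
  · rw [hexp, h1, one_smul]
  · exfalso
    have : (0:ℝ) ≤ (D.coeff α γ : ℝ) := by exact_mod_cast hnn
    rw [h1] at this; linarith

/-- a positive root `α ≠ γ` stays positive under the simple reflection `s_γ`. -/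
lemma srefl_pos {γ : V} (hγ : γ ∈ D.S) {α : V} (hα : α ∈ D.Rpos) (hne : α ≠ γ) :
    srefl γ α ∈ D.Rpos ∧ srefl γ α ≠ γ := by
  have hαR : α ∈ D.R := D.Rpos_subset α hα
  have hγR : γ ∈ D.R := D.Rpos_subset γ (D.S_subset γ hγ)
  have hγ0 : γ ≠ 0 := D.simple_ne_zero hγ
  obtain ⟨δ, hδS, hδne, hδpos⟩ : ∃ δ ∈ D.S, δ ≠ γ ∧ 0 < D.coeff α δ := by
    by_contra hcon
    push_neg at hcon
    have : ∀ δ ∈ D.S, δ ≠ γ → D.coeff α δ = 0 := by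
      intro δ hδ hne'
      have h1 := hcon δ hδ hne'
      have h2 := (D.mem_Rpos_iff α hαR).1 hα δ hδ
      omega
    exact hne (D.eq_simple_of_support hγ hα this)
  have hcoeff : (D.coeff (srefl γ α) δ : ℝ) = (D.coeff α δ : ℝ) := by
    rw [D.coeff_srefl hγ hαR hδS, if_neg hδne]; ring
  have hpos' : 0 < D.coeff (srefl γ α) δ := by
    have : (0:ℝ) < (D.coeff (srefl γ α) δ : ℝ) := by
      rw [hcoeff]; exact_mod_cast hδpos
    exact_mod_cast this
  have hsR : srefl γ α ∈ D.R := D.srefl_root_mem hγR hαR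
  refine ⟨D.mem_Rpos_of_coeff_pos hsR hδS hpos', ?_⟩
  intro heq
  have h2 := congrArg (srefl γ) heq
  rw [srefl_involutive γ α hγ0, srefl_neg_self γ hγ0] at h2
  have this := h2
  -- α = -γ : contradiction with positivity
  have hc : (D.coeff α γ : ℝ) = -1 := by
    rw [this, D.coeff_neg hγR hγ, D.coeff_simple hγ hγ, if_pos rfl]
  have hnn : 0 ≤ D.coeff α γ := (D.mem_Rpos_iff α hαR).1 hα γ hγ
  have : (0:ℝ) ≤ (D.coeff α γ : ℝ) := by exact_mod_cast hnn
  linarith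

end RootSystemWithBase
namespace RootSystemWithBase
variable {V : Type*} [NormedAddCommGroup V] [InnerProductSpace ℝ V]
  [FiniteDimensional ℝ V] [DecidableEq V] (D : RootSystemWithBase V)

lemma mem_RP_Rpos {SP : Finset V} {α : V} (h : α ∈ D.RP SP) : α ∈ D.Rpos := by
  classical
  unfold RP at h
  exact (Finset.mem_filter.1 h).1

lemma RP_coeff_eq_zero {SP : Finset V} (hSP : SP ⊆ D.S) {α : V} (h : α ∈ D.RP SP) :
    ∀ δ ∈ D.S, δ ∉ SP → D.coeff α δ = 0 := by
  intro δ hδ hδP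
  classical
  unfold RP at h
  obtain ⟨hpos, c, hc0, hcsum⟩ := Finset.mem_filter.1 h
  have hαR : α ∈ D.R := D.Rpos_subset α hpos
  have hsum : α = ∑ δ ∈ D.S, (if δ ∈ SP then (c δ : ℝ) else 0) • δ := by
    rw [← Finset.sum_subset hSP (fun x _ hx => by rw [if_neg hx, zero_smul])]
    rw [hcsum]
    refine Finset.sum_congr rfl fun δ' hδ' => ?_
    rw [if_pos hδ', Int.cast_smul_eq_zsmul]
  have := D.coeff_unique hαR _ hsum δ hδ
  rw [if_neg hδP] at this
  exact_mod_cast this.symm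

lemma RP_ccoeff_eq_zero {SP : Finset V} (hSP : SP ⊆ D.S) {α : V} (h : α ∈ D.RP SP) :
    ∀ δ ∈ D.S, δ ∉ SP → D.ccoeff α δ = 0 := fun δ hδ hδP =>
  (D.ccoeff_eq_zero_iff (D.mem_RP_Rpos h) hδ).2 (D.RP_coeff_eq_zero hSP h δ hδ hδP)

lemma simple_mem_RP {SP : Finset V} (hSP : SP ⊆ D.S) {γ : V} (hγ : γ ∈ SP) :
    γ ∈ D.RP SP := by
  classical
  unfold RP
  refine Finset.mem_filter.2 ⟨D.S_subset γ (hSP hγ), ?_⟩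
  refine ⟨fun δ => if δ = γ then 1 else 0, fun δ => by dsimp only; split <;> omega, ?_⟩
  rw [Finset.sum_eq_single_of_mem γ hγ]
  · simp
  · intro b _ hb; simp [hb]

lemma srefl_RP {SP : Finset V} (hSP : SP ⊆ D.S) {γ : V} (hγ : γ ∈ SP)
    {α : V} (hα : α ∈ D.RP SP) (hne : α ≠ γ) :
    srefl γ α ∈ D.RP SP ∧ srefl γ α ≠ γ := by
  have hγS : γ ∈ D.S := hSP hγ
  have hαpos : α ∈ D.Rpos := D.mem_RP_Rpos hα
  obtain ⟨hspos, hsne⟩ := D.srefl_pos hγS hαpos hne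
  refine ⟨?_, hsne⟩
  have hsR : srefl γ α ∈ D.R := D.Rpos_subset _ hspos
  have hzero : ∀ δ ∈ D.S, δ ∉ SP → D.coeff (srefl γ α) δ = 0 := by
    intro δ hδ hδP
    have hδγ : δ ≠ γ := fun h => hδP (h ▸ hγ)
    have := D.coeff_srefl hγS (D.Rpos_subset α hαpos) hδ
    rw [if_neg hδγ, mul_zero, sub_zero] at this
    have h0 := D.RP_coeff_eq_zero hSP hα δ hδ hδP
    have : (D.coeff (srefl γ α) δ : ℝ) = 0 := by rw [this, h0]; simp
    exact_mod_cast this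
  classical
  unfold RP
  refine Finset.mem_filter.2 ⟨hspos, ?_⟩
  refine ⟨fun δ => if δ ∈ SP then D.coeff (srefl γ α) δ else 0, ?_, ?_⟩
  · intro δ
    dsimp only
    split
    · next hmem => exact (D.mem_Rpos_iff _ hsR).1 hspos δ (hSP hmem)
    · omega
  · conv_lhs => rw [D.root_eq_sum _ hsR]
    rw [← Finset.sum_subset hSP (fun x hx hxP => by
      rw [hzero x hx hxP, zero_smul])]
    exact Finset.sum_congr rfl fun δ hδ => by dsimp only; rw [if_pos hδ]

lemma ht_pos {α : V} (hα : α ∈ D.Rpos) : 1 ≤ D.ht α := by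
  have hαR : α ∈ D.R := D.Rpos_subset α hα
  have hne : α ≠ 0 := D.root_ne_zero α hαR
  by_contra hcon
  push_neg at hcon
  have hz : ∀ γ ∈ D.S, D.ccoeff α γ = 0 := by
    intro γ hγ
    have h1 := D.ccoeff_nonneg α hα γ hγ
    have hsum : D.ht α = ∑ γ ∈ D.S, D.ccoeff α γ := rfl
    have hnn : 0 ≤ D.ht α := hsum ▸ Finset.sum_nonneg (fun γ hγ => D.ccoeff_nonneg α hα γ hγ)
    have h0 : D.ht α = 0 := by omega
    have := (Finset.sum_eq_zero_iff_of_nonneg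
      (fun γ hγ => D.ccoeff_nonneg α hα γ hγ)).1 (hsum ▸ h0)
    exact this γ hγ
  have hcor : (2 / ⟪α, α⟫) • α = 0 := by
    rw [D.coroot_eq_sum α hα]
    refine Finset.sum_eq_zero fun γ hγ => ?_
    rw [hz γ hγ, zero_smul]
  have h2 : (2 / ⟪α, α⟫ : ℝ) ≠ 0 := by
    have := D.root_inner_ne hαR
    positivity
  exact hne (by
    have := smul_eq_zero.1 hcor
    rcases this with h | h
    · exact absurd h h2
    · exact h)
end RootSystemWithBase
namespace RootSystemWithBase
variable {V : Type*} [NormedAddCommGroup V] [InnerProductSpace ℝ V]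
  [FiniteDimensional ℝ V] [DecidableEq V] (D : RootSystemWithBase V)

/-- roots whose coroot is supported on `insert β SP` -/
noncomputable def Tset (SP : Finset V) (β : V) : Finset V :=
  D.Rpos.filter fun α => ∀ γ ∈ D.S, γ ∉ insert β SP → D.ccoeff α γ = 0

lemma Tset_subset_Rpos {SP : Finset V} {β : V} : D.Tset SP β ⊆ D.Rpos :=
  Finset.filter_subset _ _

lemma mem_Tset {SP : Finset V} {β α : V} (h : α ∈ D.Tset SP β) :
    α ∈ D.Rpos ∧ ∀ γ ∈ D.S, γ ∉ insert β SP → D.ccoeff α γ = 0 :=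
  Finset.mem_filter.1 h

lemma RP_subset_Tset {SP : Finset V} (hSP : SP ⊆ D.S) {β : V} :
    D.RP SP ⊆ D.Tset SP β := by
  intro α hα
  refine Finset.mem_filter.2 ⟨D.mem_RP_Rpos hα, fun γ hγ hγQ => ?_⟩
  exact D.RP_ccoeff_eq_zero hSP hα γ hγ (fun h => hγQ (Finset.mem_insert_of_mem h))

lemma Q_mem_Tset {SP : Finset V} (hSP : SP ⊆ D.S) {β : V} (hβS : β ∈ D.S)
    {γ : V} (hγ : γ ∈ insert β SP) : γ ∈ D.Tset SP β := by
  have hγS : γ ∈ D.S := by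
    rcases Finset.mem_insert.1 hγ with h | h
    · exact h ▸ hβS
    · exact hSP h
  refine Finset.mem_filter.2 ⟨D.S_subset γ hγS, fun δ hδ hδQ => ?_⟩
  have hδγ : δ ≠ γ := fun h => hδQ (h ▸ hγ)
  have := D.ccoeff_simple hγS hδ
  rw [if_neg hδγ] at this
  exact_mod_cast this

lemma srefl_Tset {SP : Finset V} (hSP : SP ⊆ D.S) {β : V} (hβS : β ∈ D.S)
    {γ : V} (hγ : γ ∈ insert β SP) {α : V} (hα : α ∈ D.Tset SP β) (hne : α ≠ γ) :
    srefl γ α ∈ D.Tset SP β ∧ srefl γ α ≠ γ := by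
  have hγS : γ ∈ D.S := by
    rcases Finset.mem_insert.1 hγ with h | h
    · exact h ▸ hβS
    · exact hSP h
  obtain ⟨hαpos, hαsupp⟩ := D.mem_Tset hα
  obtain ⟨hspos, hsne⟩ := D.srefl_pos hγS hαpos hne
  refine ⟨Finset.mem_filter.2 ⟨hspos, fun δ hδ hδQ => ?_⟩, hsne⟩
  have hδγ : δ ≠ γ := fun h => hδQ (h ▸ hγ)
  have := D.ccoeff_srefl hγS hαpos hspos hδ
  rw [if_neg hδγ, mul_zero, sub_zero, hαsupp δ hδ hδQ] at this
  exact_mod_cast this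

lemma srefl_sum (γ : V) {ι : Type*} (s : Finset ι) (f : ι → V) :
    srefl γ (∑ i ∈ s, f i) = ∑ i ∈ s, srefl γ (f i) := by
  unfold srefl
  rw [pair_sum, Finset.sum_sub_distrib, Finset.sum_smul]

lemma pair_sum_eq_two {γ : V} (hγ : γ ∈ D.S) {t : Finset V} (hγt : γ ∈ t)
    (hstab : ∀ α ∈ t, α ≠ γ → srefl γ α ∈ t ∧ srefl γ α ≠ γ) :
    pair (∑ α ∈ t, α) γ = 2 := by
  have hγ0 : γ ≠ 0 := D.simple_ne_zero hγ
  have hmape : ∀ α ∈ t.erase γ, srefl γ α ∈ t.erase γ := by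
    intro α hα
    obtain ⟨hne, hαt⟩ := Finset.mem_erase.1 hα
    obtain ⟨h1, h2⟩ := hstab α hαt hne
    exact Finset.mem_erase.2 ⟨h2, h1⟩
  have hesum : ∑ α ∈ t.erase γ, srefl γ α = ∑ α ∈ t.erase γ, α := by
    refine Finset.sum_bij' (fun α _ => srefl γ α) (fun α _ => srefl γ α)
      ?_ ?_ ?_ ?_ ?_
    · exact hmape
    · exact hmape
    · intro α hα; exact srefl_involutive γ α hγ0
    · intro α hα; exact srefl_involutive γ α hγ0
    · intro α hα; rfl
  have e2 : srefl γ (∑ α ∈ t, α) = (∑ α ∈ t, α) - (2:ℝ) • γ := by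
    rw [srefl_sum]
    rw [← Finset.add_sum_erase t (srefl γ) hγt, hesum, srefl_neg_self γ hγ0,
      ← Finset.add_sum_erase t (fun α => α) hγt, two_smul]
    abel
  have e1 : srefl γ (∑ α ∈ t, α) = (∑ α ∈ t, α) - pair (∑ α ∈ t, α) γ • γ := rfl
  have : pair (∑ α ∈ t, α) γ • γ = (2:ℝ) • γ :=
    sub_right_injective (e1.symm.trans e2)
  have hd : (pair (∑ α ∈ t, α) γ - 2) • γ = 0 := by
    rw [sub_smul, this, sub_self]
  rcases smul_eq_zero.1 hd with h | h
  · linarith [h]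
  · exact absurd h hγ0

end RootSystemWithBase

/-- Fix `β ∈ S ∖ S_P` and an integer `j` with
`1 ≤ j ≤ n_β − 1`.  Then for every function `k : S ∖ S_P → ℤ` with
`k(β) = −j`, one has
`∏_{α ∈ R⁺∖R_P⁺} ( ht(α^∨) + Σ_{γ ∈ S∖S_P} k(γ)·c_γ(α^∨) ) = 0`. -/
theorem hilbert_polynomial_vanishes {V : Type*} [NormedAddCommGroup V]
    [InnerProductSpace ℝ V] [FiniteDimensional ℝ V] [DecidableEq V]
    (D : RootSystemWithBase V)
    (SP : Finset V) (hSP : SP ⊆ D.S) (β : V) (hβS : β ∈ D.S) (hβP : β ∉ SP)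
    (j : ℤ) (hj1 : 1 ≤ j) (hj2 : j ≤ D.n SP β - 1)
    (k : V → ℤ) (hk : k β = -j) :
    ∏ α ∈ D.Rpos \ D.RP SP,
      (D.ht α + ∑ γ ∈ D.S \ SP, k γ * D.ccoeff α γ) = 0 := by
  classical
  by_contra hprod
  have hfac : ∀ α ∈ D.Rpos \ D.RP SP,
      (D.ht α + ∑ γ ∈ D.S \ SP, k γ * D.ccoeff α γ) ≠ 0 := by
    intro α hα h0
    exact hprod (Finset.prod_eq_zero hα h0)
  set Q : Finset V := insert β SP with hQ
  set T : Finset V := D.Tset SP β with hTdef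
  have hQS : ∀ γ ∈ Q, γ ∈ D.S := by
    intro γ hγ
    rcases Finset.mem_insert.1 hγ with h | h
    · exact h ▸ hβS
    · exact hSP h
  set ρQ2 : V := ∑ α ∈ T, α with hρQ2def
  set ρP2 : V := ∑ α ∈ D.RP SP, α with hρP2def
  have hn2 : 2 ≤ D.n SP β := by omega
  set nr : ℝ := ((D.n SP β : ℤ) : ℝ) with hnrdef
  have hnr2 : (2:ℝ) ≤ nr := by rw [hnrdef]; exact_mod_cast hn2
  have hnr0 : nr ≠ 0 := by linarith
  have hpairQ : ∀ γ ∈ Q, pair ρQ2 γ = 2 := by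
    intro γ hγ
    exact D.pair_sum_eq_two (hQS γ hγ) (D.Q_mem_Tset hSP hβS hγ)
      (fun α hα hne => D.srefl_Tset hSP hβS hγ hα hne)
  have hpairP : ∀ γ ∈ SP, pair ρP2 γ = 2 := by
    intro γ hγ
    exact D.pair_sum_eq_two (hSP hγ) (D.simple_mem_RP hSP hγ)
      (fun α hα hne => D.srefl_RP hSP hγ hα hne)
  have hβR : β ∈ D.R := D.Rpos_subset β (D.S_subset β hβS)
  have hpairPβ : pair ρP2 β = 2 - nr := by
    rw [hρP2def, pair_sum]
    rw [Finset.sum_congr rfl (fun α hα =>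
      D.pair_cartan (D.Rpos_subset α (D.mem_RP_Rpos hα)) hβR)]
    have h1 : (∑ α ∈ D.RP SP, D.cartan α β) = 2 - D.n SP β := by
      unfold RootSystemWithBase.n; ring
    rw [← Int.cast_sum, h1]
    push_cast [hnrdef]
    ring
  set ϖ : V := (1/nr) • (ρQ2 - ρP2) with hϖdef
  have hpairϖ : ∀ γ ∈ SP, pair ϖ γ = 0 := by
    intro γ hγ
    rw [hϖdef, pair_smul, pair_sub, hpairQ γ (Finset.mem_insert_of_mem hγ), hpairP γ hγ]
    ring
  have hpairϖβ : pair ϖ β = 1 := by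
    rw [hϖdef, pair_smul, pair_sub, hpairQ β (Finset.mem_insert_self β SP), hpairPβ]
    field_simp
    ring
  set lam : V := (1/2 : ℝ) • ρQ2 - (j:ℝ) • ϖ with hlamdef
  have hpairlam : ∀ γ ∈ SP, pair lam γ = 1 := by
    intro γ hγ
    rw [hlamdef, pair_sub, pair_smul, pair_smul,
      hpairQ γ (Finset.mem_insert_of_mem hγ), hpairϖ γ hγ]
    ring
  have hpairlamβ : pair lam β = 1 - (j:ℝ) := by
    rw [hlamdef, pair_sub, pair_smul, pair_smul,
      hpairQ β (Finset.mem_insert_self β SP), hpairϖβ]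
    ring
  -- pairing of `lam` with roots in `T`
  have hlamT : ∀ α ∈ T, pair lam α = (D.ht α : ℝ) - (j:ℝ) * (D.ccoeff α β : ℝ) := by
    intro α hα
    obtain ⟨hαpos, hsupp⟩ := D.mem_Tset hα
    rw [D.pair_expand hαpos lam]
    have hsplit : ∀ γ ∈ D.S.erase β, (D.ccoeff α γ : ℝ) * pair lam γ = (D.ccoeff α γ : ℝ) := by
      intro γ hγ
      obtain ⟨hγβ, hγS⟩ := Finset.mem_erase.1 hγ
      by_cases hγP : γ ∈ SP
      · rw [hpairlam γ hγP, mul_one]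
      · have : γ ∉ Q := by
          rw [hQ]
          intro hmem
          rcases Finset.mem_insert.1 hmem with h | h
          · exact hγβ h
          · exact hγP h
        rw [hsupp γ hγS this]
        push_cast
        ring
    rw [← Finset.add_sum_erase _ _ hβS, hpairlamβ,
      Finset.sum_congr rfl hsplit]
    have hht : (D.ht α : ℝ) = (D.ccoeff α β : ℝ) + ∑ γ ∈ D.S.erase β, (D.ccoeff α γ : ℝ) := by
      have : D.ht α = D.ccoeff α β + ∑ γ ∈ D.S.erase β, D.ccoeff α γ := by
        unfold RootSystemWithBase.ht
        rw [← Finset.add_sum_erase _ _ hβS]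
      rw [this]
      push_cast
      ring
    rw [hht]
    ring
  have hreg : ∀ α ∈ T, pair lam α ≠ 0 := by
    intro α hα
    obtain ⟨hαpos, hsupp⟩ := D.mem_Tset hα
    rw [hlamT α hα]
    by_cases hαP : α ∈ D.RP SP
    · have hccβ : D.ccoeff α β = 0 := D.RP_ccoeff_eq_zero hSP hαP β hβS hβP
      have h1 : 1 ≤ D.ht α := D.ht_pos hαpos
      rw [hccβ]
      have : (1:ℝ) ≤ (D.ht α : ℝ) := by exact_mod_cast h1
      push_cast
      intro hcon
      linarith
    · have hα' : α ∈ D.Rpos \ D.RP SP := Finset.mem_sdiff.2 ⟨hαpos, hαP⟩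
      have hf := hfac α hα'
      have hkey : ∑ γ ∈ D.S \ SP, k γ * D.ccoeff α γ = - j * D.ccoeff α β := by
        rw [Finset.sum_eq_single_of_mem β (Finset.mem_sdiff.2 ⟨hβS, hβP⟩)]
        · rw [hk]
        · intro γ hγ hγβ
          obtain ⟨hγS, hγP⟩ := Finset.mem_sdiff.1 hγ
          have : γ ∉ Q := by
            rw [hQ]
            intro hmem
            rcases Finset.mem_insert.1 hmem with h | h
            · exact hγβ h
            · exact hγP h
          rw [hsupp γ hγS this, mul_zero]
      intro hcon
      apply hf
      rw [hkey]
      have : ((D.ht α - j * D.ccoeff α β : ℤ) : ℝ) = 0 := by push_cast; linarith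
      have h2 : D.ht α - j * D.ccoeff α β = 0 := by exact_mod_cast this
      linarith [h2]
  have hInt0 : ∀ γ ∈ Q, ∃ m : ℤ, pair lam γ = (m:ℝ) := by
    intro γ hγ
    rcases Finset.mem_insert.1 hγ with h | h
    · exact ⟨1 - j, by rw [h, hpairlamβ]; push_cast; ring⟩
    · exact ⟨1, by rw [hpairlam γ h]; norm_num⟩
  -- norm computations
  have hβ0 : β ≠ 0 := D.simple_ne_zero hβS
  have hρP2ϖ : ⟪ρP2, ϖ⟫ = 0 := by
    rw [hρP2def, sum_inner]
    refine Finset.sum_eq_zero fun α hα => ?_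
    have hαpos := D.mem_RP_Rpos hα
    have hα0 : α ≠ 0 := D.root_ne_zero α (D.Rpos_subset α hαpos)
    rw [real_inner_comm, inner_eq_pair ϖ α hα0]
    have hp0 : pair ϖ α = 0 := by
      rw [D.pair_expand hαpos ϖ]
      refine Finset.sum_eq_zero fun γ hγ => ?_
      by_cases hγP : γ ∈ SP
      · rw [hpairϖ γ hγP, mul_zero]
      · rw [D.RP_ccoeff_eq_zero hSP hα γ hγ hγP]
        push_cast
        ring
    rw [hp0]
    ring
  have hQP : ρQ2 - ρP2 = nr • ϖ := by
    rw [hϖdef, smul_smul]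
    rw [show nr * (1/nr) = 1 by field_simp]
    rw [one_smul]
  have hρQ2ϖ : ⟪ρQ2, ϖ⟫ = nr * ⟪ϖ, ϖ⟫ := by
    have hre : ρQ2 = nr • ϖ + ρP2 := by rw [← hQP]; abel
    rw [hre, inner_add_left, real_inner_smul_left, hρP2ϖ]
    ring
  have hϖpos : 0 < ⟪ϖ, ϖ⟫ := by
    refine inner_self_pos' ?_
    intro h0
    rw [h0] at hpairϖβ
    unfold pair at hpairϖβ
    rw [inner_zero_left] at hpairϖβ
    simp at hpairϖβ
  set ρQ : V := (1/2:ℝ) • ρQ2 with hρQdef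
  have hpairρQ : ∀ γ ∈ Q, pair ρQ γ = 1 := by
    intro γ hγ
    rw [hρQdef, pair_smul, hpairQ γ hγ]
    ring
  have hnormlt : ⟪lam, lam⟫ < ⟪ρQ, ρQ⟫ := by
    have hjr1 : (1:ℝ) ≤ (j:ℝ) := by exact_mod_cast hj1
    have hjrn : (j:ℝ) ≤ nr - 1 := by
      rw [hnrdef]
      have : (j:ℝ) ≤ ((D.n SP β - 1 : ℤ):ℝ) := by exact_mod_cast hj2
      push_cast at this ⊢
      linarith
    have hρQϖ : ⟪ρQ, ϖ⟫ = (nr/2) * ⟪ϖ,ϖ⟫ := by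
      rw [hρQdef, real_inner_smul_left, hρQ2ϖ]
      ring
    have hlr : lam = ρQ - (j:ℝ) • ϖ := by rw [hlamdef, hρQdef]
    have hexp : ⟪lam,lam⟫ = ⟪ρQ,ρQ⟫ - 2*(j:ℝ)*⟪ρQ,ϖ⟫ + (j:ℝ)^2*⟪ϖ,ϖ⟫ := by
      rw [hlr]
      simp only [inner_sub_left, inner_sub_right, real_inner_smul_left,
        real_inner_smul_right]
      rw [real_inner_comm ϖ ρQ]
      ring
    rw [hexp, hρQϖ]
    have hjpos : (0:ℝ) < (j:ℝ) := by linarith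
    have hjn : (j:ℝ) < nr := by linarith
    have h1 : (j:ℝ) * (j:ℝ) < (j:ℝ) * nr := mul_lt_mul_of_pos_left hjn hjpos
    have hkey := mul_lt_mul_of_pos_right h1 hϖpos
    nlinarith [hkey]
  -- the main induction
  have main : ∀ N : ℕ, ∀ x : V,
      (∀ γ ∈ Q, ∃ m : ℤ, pair x γ = (m:ℝ)) →
      (∀ α ∈ T, pair x α ≠ 0) →
      ⟪x, x⟫ = ⟪lam, lam⟫ →
      (T.filter fun α => pair x α < 0).card = N → False := by
    intro N
    induction N using Nat.strong_induction_on with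
    | _ N ih =>
      intro x hInt hReg hnorm hcard
      by_cases hdom : ∃ γ ∈ Q, pair x γ < 0
      · obtain ⟨γ, hγQ, hγneg⟩ := hdom
        have hγS := hQS γ hγQ
        have hγ0 : γ ≠ 0 := D.simple_ne_zero hγS
        have hγR : γ ∈ D.R := D.Rpos_subset γ (D.S_subset γ hγS)
        have hγinner : ⟪γ, γ⟫ ≠ (0:ℝ) := D.root_inner_ne hγR
        set x' := srefl γ x with hx'def
        have hpair' : ∀ z, pair x' z = pair x (srefl γ z) :=
          fun z => pair_srefl_right γ x z hγ0
        have hInt' : ∀ γ' ∈ Q, ∃ m : ℤ, pair x' γ' = (m:ℝ) := by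
          intro γ' hγ'
          obtain ⟨m1, hm1⟩ := hInt γ' hγ'
          obtain ⟨m2, hm2⟩ := hInt γ hγQ
          refine ⟨m1 - m2 * D.cartan γ γ', ?_⟩
          have hγ'R : γ' ∈ D.R := D.Rpos_subset γ' (D.S_subset γ' (hQS γ' hγ'))
          rw [hx'def, pair_srefl γ x γ', hm1, hm2, D.pair_cartan hγR hγ'R]
          push_cast
          ring
        have hγx' : pair x' γ = - pair x γ := by
          rw [hpair' γ, srefl_neg_self γ hγ0, pair_neg_right]
        have hReg' : ∀ α ∈ T, pair x' α ≠ 0 := by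
          intro α hα
          by_cases hαγ : α = γ
          · rw [hαγ, hγx']
            intro h; apply hReg γ (D.Q_mem_Tset hSP hβS hγQ); linarith
          · obtain ⟨hsT, _⟩ := D.srefl_Tset hSP hβS hγQ hα hαγ
            rw [hpair' α]
            exact hReg _ hsT
        have hnorm' : ⟪x',x'⟫ = ⟪lam,lam⟫ := by
          rw [hx'def, inner_srefl_srefl γ x x hγ0]; exact hnorm
        have hγT : γ ∈ T := D.Q_mem_Tset hSP hβS hγQ
        have hγA : γ ∈ T.filter (fun α => pair x α < 0) :=
          Finset.mem_filter.2 ⟨hγT, hγneg⟩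
        have hcard' : (T.filter fun α => pair x' α < 0).card
            = ((T.filter fun α => pair x α < 0).erase γ).card := by
          refine Finset.card_bij' (fun α _ => srefl γ α) (fun α _ => srefl γ α)
            ?_ ?_ ?_ ?_
          · intro α hα
            obtain ⟨hαT, hαneg⟩ := Finset.mem_filter.1 hα
            have hαγ : α ≠ γ := by
              intro h
              rw [h, hγx'] at hαneg
              linarith
            obtain ⟨hsT, hsγ⟩ := D.srefl_Tset hSP hβS hγQ hαT hαγ
            refine Finset.mem_erase.2 ⟨hsγ, Finset.mem_filter.2 ⟨hsT, ?_⟩⟩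
            rw [← hpair' α]
            exact hαneg
          · intro α hα
            obtain ⟨hαγ, hα2⟩ := Finset.mem_erase.1 hα
            obtain ⟨hαT, hαneg⟩ := Finset.mem_filter.1 hα2
            obtain ⟨hsT, hsγ⟩ := D.srefl_Tset hSP hβS hγQ hαT hαγ
            refine Finset.mem_filter.2 ⟨hsT, ?_⟩
            rw [hpair' _, srefl_involutive γ α hγ0]
            exact hαneg
          · intro α hα
            exact srefl_involutive γ α hγ0
          · intro α hα
            exact srefl_involutive γ α hγ0
        have hN1 : 1 ≤ N := by
          rw [← hcard]
          exact Finset.card_pos.2 ⟨γ, hγA⟩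
        refine ih (N-1) (by omega) x' hInt' hReg' hnorm' ?_
        rw [hcard', Finset.card_erase_of_mem hγA, hcard]
      · push_neg at hdom
        have hge1 : ∀ γ ∈ Q, (1:ℝ) ≤ pair x γ := by
          intro γ hγ
          obtain ⟨m, hm⟩ := hInt γ hγ
          have h1 := hdom γ hγ
          have h2 := hReg γ (D.Q_mem_Tset hSP hβS hγ)
          have h0 : (0:ℝ) ≤ pair x γ := h1
          rw [hm] at h0 ⊢
          have hm0 : 0 ≤ m := by exact_mod_cast h0
          have hmne : m ≠ 0 := by
            intro hz
            apply h2
            rw [hm, hz]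
            norm_num
          have hm1 : 1 ≤ m := by omega
          exact_mod_cast hm1
        set ν : V := x - ρQ with hνdef
        have hνdom : ∀ γ ∈ Q, 0 ≤ pair ν γ := by
          intro γ hγ
          rw [hνdef, pair_sub, hpairρQ γ hγ]
          linarith [hge1 γ hγ]
        have hνα : ∀ α ∈ T, 0 ≤ ⟪α, ν⟫ := by
          intro α hα
          obtain ⟨hαpos, hsupp⟩ := D.mem_Tset hα
          have hα0 : α ≠ 0 := D.root_ne_zero α (D.Rpos_subset α hαpos)
          rw [real_inner_comm, inner_eq_pair ν α hα0]
          have hp : 0 ≤ pair ν α := by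
            rw [D.pair_expand hαpos ν]
            refine Finset.sum_nonneg fun γ hγ => ?_
            by_cases hγQ' : γ ∈ Q
            · have h1 : (0:ℝ) ≤ (D.ccoeff α γ : ℝ) := by
                exact_mod_cast D.ccoeff_nonneg α hαpos γ hγ
              exact mul_nonneg h1 (hνdom γ hγQ')
            · rw [hsupp γ hγ hγQ']
              push_cast
              simp
          have hαα : (0:ℝ) < ⟪α,α⟫ := inner_self_pos' hα0
          positivity
        have hQν : 0 ≤ ⟪ρQ, ν⟫ := by
          rw [hρQdef, real_inner_smul_left, hρQ2def, sum_inner]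
          refine mul_nonneg (by norm_num) (Finset.sum_nonneg fun α hα => hνα α hα)
        have hxν : ⟪ρQ,ρQ⟫ ≤ ⟪x,x⟫ := by
          have hxe : x = ρQ + ν := by rw [hνdef]; abel
          have hexp2 : ⟪x,x⟫ = ⟪ρQ,ρQ⟫ + 2*⟪ρQ,ν⟫ + ⟪ν,ν⟫ := by
            rw [hxe]
            simp only [inner_add_left, inner_add_right]
            rw [real_inner_comm ν ρQ]
            ring
          rw [hexp2]
          linarith [hQν, real_inner_self_nonneg (x := ν)]
        rw [hnorm] at hxν
        linarith
  exact main _ lam hInt0 hreg rfl rfl
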